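/- (First-order cumulant hierarchy) Let Λ : ℝⁿ → ℝ be twice continuously differentiable, let 𝓡 : ℝ → n×n real matrices and w : ℝ → ℝⁿ be differentiable at θ = 0 with 𝓡(0) = I (identity matrix) and w(0) = 0, and suppose Λ(k) = Λ(𝓡(θ)ᵀk − w(θ)) for all θ ∈ ℝ and all k ∈ ℝⁿ. Set 𝓝 := (d/dθ)𝓡(θ)|_{θ=0} and w' := (d/dθ)w(θ)|_{θ=0}. Then for every index i ∈ {1,…,n}: ∑_{j=1}^{n} 𝓝_{ij} ∂_jΛ(0) = ∑_{j=1}^{n} w'_j ∂_i∂_jΛ(0), i.e. the first cumulants ∂_jΛ(0) and the second cumulants ∂_i∂_jΛ(0) satisfy the relation 𝓝·∇Λ(0) = HessΛ(0)·w'. -/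

import Mathlib

open Matrix

/-- **First-order cumulant hierarchy.**
Let `Λ : ℝⁿ → ℝ` be `C²`, let `θ ↦ 𝓡 θ` (matrices) and `θ ↦ w θ` (vectors) be
differentiable at `θ = 0` (entrywise, with derivatives `N` and `w'`), with `𝓡 0 = 1`
and `w 0 = 0`, and suppose the symmetry `Λ k = Λ ((𝓡 θ)ᵀ *ᵥ k - w θ)` holds for all
`θ` and `k`.  Then for every `i`,
`∑ j, N i j * ∂ⱼΛ(0) = ∑ j, w' j * ∂ᵢ∂ⱼΛ(0)`, where `∂ⱼΛ(0)` is the `j`-th partial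
derivative of `Λ` at `0` and `∂ᵢ∂ⱼΛ(0)` the second partial derivatives. -/
theorem first_order_cumulant_hierarchy
    {n : ℕ} (hn : 1 ≤ n)
    (Λ : (Fin n → ℝ) → ℝ) (hΛ : ContDiff ℝ 2 Λ)
    (𝓡 : ℝ → Matrix (Fin n) (Fin n) ℝ) (w : ℝ → (Fin n → ℝ))
    (N : Matrix (Fin n) (Fin n) ℝ) (w' : Fin n → ℝ)
    (h𝓡' : ∀ i j, HasDerivAt (fun θ => 𝓡 θ i j) (N i j) 0)
    (hw' : ∀ j, HasDerivAt (fun θ => w θ j) (w' j) 0)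
    (h𝓡0 : 𝓡 0 = 1) (hw0 : w 0 = 0)
    (hsym : ∀ θ : ℝ, ∀ k : Fin n → ℝ, Λ k = Λ ((𝓡 θ)ᵀ *ᵥ k - w θ)) :
    ∀ i : Fin n,
      ∑ j : Fin n, N i j * fderiv ℝ Λ 0 (Pi.single j 1)
        = ∑ j : Fin n, w' j *
            fderiv ℝ (fun x => fderiv ℝ Λ x (Pi.single j 1)) 0 (Pi.single i 1) := by
  have hΛd : Differentiable ℝ Λ := hΛ.differentiable (by norm_num)
  -- Step 1: for all k, fderiv Λ k (v k) = 0, with v k j = ∑ m, N m j * k m - w' j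
  have step1 : ∀ k : Fin n → ℝ,
      (fderiv ℝ Λ k) (fun j => ∑ m, N m j * k m - w' j) = 0 := by
    intro k
    set v : Fin n → ℝ := fun j => ∑ m, N m j * k m - w' j with hv
    have hφ : HasDerivAt (fun θ : ℝ => (𝓡 θ)ᵀ *ᵥ k - w θ) v 0 := by
      rw [hasDerivAt_pi]
      intro j
      have : HasDerivAt (fun θ : ℝ => ∑ m, 𝓡 θ m j * k m - w θ j)
          (∑ m, N m j * k m - w' j) 0 :=
        (HasDerivAt.fun_sum fun m _ => (h𝓡' m j).mul_const (k m)).sub (hw' j)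
      have hfun : (fun θ : ℝ => ((𝓡 θ)ᵀ *ᵥ k - w θ) j)
          = fun θ : ℝ => ∑ m, 𝓡 θ m j * k m - w θ j := by
        funext θ
        simp [Matrix.mulVec, Matrix.transpose_apply, dotProduct, Pi.sub_apply, mul_comm]
      rw [hfun]
      exact this
    have hφ0 : ((𝓡 0)ᵀ *ᵥ k - w 0) = k := by
      simp [h𝓡0, hw0]
    have hcomp : HasDerivAt (fun θ : ℝ => Λ ((𝓡 θ)ᵀ *ᵥ k - w θ))
        ((fderiv ℝ Λ k) v) 0 := by
      have := (hΛd ((𝓡 0)ᵀ *ᵥ k - w 0)).hasFDerivAt.comp_hasDerivAt 0 hφ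
      rw [hφ0] at this
      exact this
    have hconst : HasDerivAt (fun θ : ℝ => Λ ((𝓡 θ)ᵀ *ᵥ k - w θ)) 0 0 := by
      have : (fun θ : ℝ => Λ ((𝓡 θ)ᵀ *ᵥ k - w θ)) = fun _ => Λ k := by
        funext θ; exact (hsym θ k).symm
      rw [this]; exact hasDerivAt_const 0 _
    exact hcomp.unique hconst
  -- expansion of a continuous linear functional over the standard basis
  have expand : ∀ (L : (Fin n → ℝ) →L[ℝ] ℝ) (x : Fin n → ℝ),
      L x = ∑ j, x j * L (Pi.single j 1) := by
    intro L x
    have hx : x = ∑ j, x j • (Pi.single j 1 : Fin n → ℝ) := by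
      funext m
      simp [Finset.sum_apply, Pi.single_apply]
    conv_lhs => rw [hx]
    rw [map_sum]
    simp [smul_eq_mul]
  -- G k = 0 in expanded form
  have hG : ∀ k : Fin n → ℝ,
      ∑ j, (∑ m, N m j * k m - w' j) * (fderiv ℝ Λ k) (Pi.single j 1) = 0 := by
    intro k
    rw [← expand (fderiv ℝ Λ k) (fun j => ∑ m, N m j * k m - w' j)]
    exact step1 k
  intro i
  -- F j is C¹
  have hF : ∀ j : Fin n, ContDiff ℝ 1 (fun x => (fderiv ℝ Λ x) (Pi.single j 1)) := by
    intro j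
    exact (ContinuousLinearMap.apply ℝ ℝ (Pi.single j 1 : Fin n → ℝ)).contDiff.comp
      (hΛ.fderiv_right (by norm_num))
  -- the line t ↦ t • eᵢ
  have hline : HasDerivAt (fun t : ℝ => t • (Pi.single i 1 : Fin n → ℝ))
      (Pi.single i 1) 0 := by
    simpa using (hasDerivAt_id (0:ℝ)).smul_const (Pi.single i 1 : Fin n → ℝ)
  have hline0 : (0:ℝ) • (Pi.single i 1 : Fin n → ℝ) = 0 := zero_smul _ _
  -- second factor derivative
  have hsecond : ∀ j : Fin n,
      HasDerivAt (fun t : ℝ => (fderiv ℝ Λ (t • (Pi.single i 1 : Fin n → ℝ))) (Pi.single j 1))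
        (fderiv ℝ (fun x => (fderiv ℝ Λ x) (Pi.single j 1)) 0 (Pi.single i 1)) 0 := by
    intro j
    have hd : DifferentiableAt ℝ (fun x => (fderiv ℝ Λ x) (Pi.single j 1)) 0 :=
      ((hF j).differentiable one_ne_zero) 0
    have hfd : HasFDerivAt (fun x => (fderiv ℝ Λ x) (Pi.single j 1))
        (fderiv ℝ (fun x => (fderiv ℝ Λ x) (Pi.single j 1)) 0)
        ((fun t : ℝ => t • (Pi.single i 1 : Fin n → ℝ)) 0) := by
      simp only [zero_smul]
      exact hd.hasFDerivAt
    exact hfd.comp_hasDerivAt 0 hline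
  -- first factor derivative
  have hfirst : ∀ j : Fin n,
      HasDerivAt
        (fun t : ℝ => ∑ m, N m j * (t • (Pi.single i 1 : Fin n → ℝ)) m - w' j)
        (N i j) 0 := by
    intro j
    have heq : (fun t : ℝ => ∑ m, N m j * (t • (Pi.single i 1 : Fin n → ℝ)) m - w' j)
        = fun t : ℝ => t * N i j - w' j := by
      funext t
      have : ∀ m, N m j * (t • (Pi.single i 1 : Fin n → ℝ)) m
          = (if m = i then t * N i j else 0) := by
        intro m
        by_cases h : m = i <;> simp [h, Pi.single_apply, mul_comm]
      simp only [this, Finset.sum_ite_eq' Finset.univ i, Finset.mem_univ, if_true]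
    rw [heq]
    simpa using ((hasDerivAt_id (0:ℝ)).mul_const (N i j)).sub_const (w' j)
  -- differentiate the expanded identity along the line
  have hsum : HasDerivAt
      (fun t : ℝ => ∑ j, (∑ m, N m j * (t • (Pi.single i 1 : Fin n → ℝ)) m - w' j)
        * (fderiv ℝ Λ (t • (Pi.single i 1 : Fin n → ℝ))) (Pi.single j 1))
      (∑ j, (N i j * (fderiv ℝ Λ 0) (Pi.single j 1)
        + (- w' j) * fderiv ℝ (fun x => (fderiv ℝ Λ x) (Pi.single j 1)) 0 (Pi.single i 1)))
      0 := by
    apply HasDerivAt.fun_sum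
    intro j _
    have h2 := (hfirst j).fun_mul (hsecond j)
    convert h2 using 1
    · rfl
    simp
  have hzero : HasDerivAt
      (fun t : ℝ => ∑ j, (∑ m, N m j * (t • (Pi.single i 1 : Fin n → ℝ)) m - w' j)
        * (fderiv ℝ Λ (t • (Pi.single i 1 : Fin n → ℝ))) (Pi.single j 1)) 0 0 := by
    have heq : (fun t : ℝ => ∑ j, (∑ m, N m j * (t • (Pi.single i 1 : Fin n → ℝ)) m - w' j)
        * (fderiv ℝ Λ (t • (Pi.single i 1 : Fin n → ℝ))) (Pi.single j 1)) = fun _ => 0 := by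
      funext t
      exact hG (t • (Pi.single i 1 : Fin n → ℝ))
    rw [heq]
    exact hasDerivAt_const 0 0
  have hkey := hsum.unique hzero
  rw [Finset.sum_add_distrib] at hkey
  have hneg : ∑ j, (- w' j) * fderiv ℝ (fun x => (fderiv ℝ Λ x) (Pi.single j 1)) 0 (Pi.single i 1)
      = - ∑ j, w' j * fderiv ℝ (fun x => (fderiv ℝ Λ x) (Pi.single j 1)) 0 (Pi.single i 1) := by
    rw [← Finset.sum_neg_distrib]
    simp [neg_mul]
  rw [hneg] at hkey
  linarith
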